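/- Let n ≥ 2 and k ≥ 1 be integers with k dividing n, and set m = n/k. Then there exists a partition of {1,…,n} into m clusters, each of size exactly k and each containing exactly one element from every consecutive block S_i = {(i−1)·m+1, …, i·m} (i = 1,…,k), such that every cluster C of the partition satisfies EMD(C) ≤ (n−k)/(2·(n−1)·k). In particular, for any real t > 0 with k ≥ n/(2(n−1)t+1), the resulting partition is simultaneously k-anonymous and t-close. -/

import Mathlib

open Finset

/-- The Earth Mover's Distance (with the ordered distance) between the uniform
distribution on a cluster `C ⊆ {1,…,n}` of `k` records and the uniform
distribution on the whole data set `{1,…,n}`. -/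
noncomputable def EMD (n k : ℕ) (C : Finset ℕ) : ℝ :=
  (1 / ((n : ℝ) - 1)) * ∑ i ∈ Finset.Icc 1 n,
    |∑ j ∈ Finset.Icc 1 i, ((if j ∈ C then (1 : ℝ) / k else 0) - 1 / n)|

def clus (m k r : ℕ) : Finset ℕ := (Finset.Icc 1 k).image (fun j => (j - 1) * m + r)

lemma clus_injOn (m k r : ℕ) (hm : 1 ≤ m) :
    Set.InjOn (fun j => (j - 1) * m + r) (Finset.Icc 1 k) := by
  intro a ha b hb hab
  simp only [coe_Icc, Set.mem_Icc] at ha hb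
  simp only at hab
  have h : (a - 1) * m = (b - 1) * m := by omega
  have := Nat.eq_of_mul_eq_mul_right (show 0 < m by omega) h
  omega

lemma card_clus (m k r : ℕ) (hm : 1 ≤ m) : (clus m k r).card = k := by
  rw [clus, Finset.card_image_of_injOn (clus_injOn m k r hm), Nat.card_Icc]; omega

lemma mem_clus {m k r x : ℕ} :
    x ∈ clus m k r ↔ ∃ j, 1 ≤ j ∧ j ≤ k ∧ (j - 1) * m + r = x := by
  simp [clus, Finset.mem_image, Finset.mem_Icc, and_assoc]

lemma clus_subset {m k r : ℕ} (hr1 : 1 ≤ r) (hrm : r ≤ m) {x : ℕ}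
    (hx : x ∈ clus m k r) : 1 ≤ x ∧ x ≤ k * m := by
  obtain ⟨j, hj1, hjk, rfl⟩ := mem_clus.1 hx
  obtain ⟨j', rfl⟩ : ∃ j', j = j' + 1 := ⟨j - 1, by omega⟩
  obtain ⟨k', rfl⟩ : ∃ k', k = k' + 1 := ⟨k - 1, by omega⟩
  simp only [Nat.add_sub_cancel]
  constructor
  · omega
  · have h1 : j' * m ≤ k' * m := Nat.mul_le_mul_right m (by omega)
    calc j' * m + r ≤ k' * m + m := by omega
      _ = (k' + 1) * m := by ring

lemma mem_clus_iff_pos {m k r x : ℕ} (hm : 1 ≤ m) (hr1 : 1 ≤ r) (hrm : r ≤ m)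
    (hx1 : 1 ≤ x) (hx2 : x ≤ k * m) :
    x ∈ clus m k r ↔ (x - 1) % m + 1 = r := by
  constructor
  · rintro hx
    obtain ⟨j, hj1, hjk, rfl⟩ := mem_clus.1 hx
    obtain ⟨j', rfl⟩ : ∃ j', j = j' + 1 := ⟨j - 1, by omega⟩
    simp only [Nat.add_sub_cancel]
    have h : (j' * m + r - 1) = (r - 1) + j' * m := by omega
    rw [h, Nat.add_mul_mod_self_right, Nat.mod_eq_of_lt (by omega)]
    omega
  · intro h
    refine mem_clus.2 ⟨(x - 1) / m + 1, Nat.le_add_left 1 _, ?_, ?_⟩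
    · have : (x - 1) / m < k := by
        rw [Nat.div_lt_iff_lt_mul (by omega : 0 < m)]
        omega
      exact this
    · simp only [Nat.add_sub_cancel]
      have hd := Nat.div_add_mod (x - 1) m
      have : (x - 1) / m * m = m * ((x - 1) / m) := by ring
      omega



-- the filter lemma
lemma filter_clus_le (m k r : ℕ) (hm : 1 ≤ m) (hr1 : 1 ≤ r) (hrm : r ≤ m)
    (i : ℕ) (hi1 : 1 ≤ i) (hi2 : i ≤ k * m) :
    ((Finset.Icc 1 k).filter (fun j => (j - 1) * m + r ≤ i)) =
      Finset.Icc 1 (if r ≤ (i - 1) % m + 1 then (i - 1) / m + 1 else (i - 1) / m) := by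
  have hd := Nat.div_add_mod (i - 1) m
  have hsm : (i - 1) % m < m := Nat.mod_lt _ (by omega)
  have hqk : (i - 1) / m < k := by
    rw [Nat.div_lt_iff_lt_mul (by omega : 0 < m)]; omega
  set q := (i - 1) / m with hq
  set s := (i - 1) % m with hs
  ext x
  simp only [mem_filter, mem_Icc]
  constructor
  · rintro ⟨⟨hx1, hxk⟩, hle⟩
    obtain ⟨x', rfl⟩ : ∃ x', x = x' + 1 := ⟨x - 1, by omega⟩
    simp only [Nat.add_sub_cancel] at hle
    refine ⟨by omega, ?_⟩
    split
    · -- r ≤ s + 1 : show x' + 1 ≤ q + 1 i.e. x' ≤ q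
      rename_i hcase
      by_contra hcon
      have h1 : (q + 1) * m ≤ x' * m := Nat.mul_le_mul_right m (by omega)
      have h2 : (q + 1) * m = m * q + m := by ring
      omega
    · rename_i hcase
      by_contra hcon
      have h1 : q * m ≤ x' * m := Nat.mul_le_mul_right m (by omega)
      have h2 : q * m = m * q := by ring
      omega
  · rintro ⟨hx1, hxB⟩
    obtain ⟨x', rfl⟩ : ∃ x', x = x' + 1 := ⟨x - 1, by omega⟩
    simp only [Nat.add_sub_cancel]
    split at hxB
    · rename_i hcase
      have h1 : x' * m ≤ q * m := Nat.mul_le_mul_right m (by omega)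
      have h2 : q * m = m * q := by ring
      exact ⟨⟨by omega, by omega⟩, by omega⟩
    · rename_i hcase
      have hq1 : 1 ≤ q := by omega
      have h1 : x' * m + m ≤ q * m := by
        have := Nat.mul_le_mul_right m (show x' + 1 ≤ q by omega)
        calc x' * m + m = (x' + 1) * m := by ring
          _ ≤ q * m := this
      have h2 : q * m = m * q := by ring
      exact ⟨⟨by omega, by omega⟩, by omega⟩




lemma sum_pos_reindex (m k : ℕ) (hm : 1 ≤ m) (G : ℕ → ℕ) :
    ∑ i ∈ Finset.Icc 1 (k * m), G ((i - 1) % m + 1) =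
      k * ∑ s ∈ Finset.Icc 1 m, G s := by
  have h : ∑ i ∈ Finset.Icc 1 (k * m), G ((i - 1) % m + 1) =
      ∑ p ∈ (Finset.Icc 1 k) ×ˢ (Finset.Icc 1 m), G p.2 := by
    refine Finset.sum_nbij' (fun i => ((i - 1) / m + 1, (i - 1) % m + 1))
      (fun p => (p.1 - 1) * m + p.2) ?_ ?_ ?_ ?_ ?_
    · intro x hx
      simp only [mem_Icc] at hx
      simp only [Finset.mem_product, mem_Icc]
      have hqk : (x - 1) / m < k := by
        rw [Nat.div_lt_iff_lt_mul (by omega : 0 < m)]; omega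
      have hsm : (x - 1) % m < m := Nat.mod_lt _ (by omega)
      exact ⟨⟨Nat.le_add_left 1 _, hqk⟩, Nat.le_add_left 1 _, hsm⟩
    · rintro ⟨b, s⟩ hp
      simp only [Finset.mem_product, mem_Icc] at hp
      simp only [mem_Icc]
      obtain ⟨⟨hb1, hbk⟩, hs1, hsm⟩ := hp
      obtain ⟨b', rfl⟩ : ∃ b', b = b' + 1 := ⟨b - 1, by omega⟩
      obtain ⟨k', rfl⟩ : ∃ k', k = k' + 1 := ⟨k - 1, by omega⟩
      simp only [Nat.add_sub_cancel]
      have h1 : b' * m ≤ k' * m := Nat.mul_le_mul_right m (by omega)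
      have h2 : k' * m + m = (k' + 1) * m := by ring
      omega
    · intro x hx
      simp only [mem_Icc] at hx
      show (((x - 1) / m + 1) - 1) * m + ((x - 1) % m + 1) = x
      simp only [Nat.add_sub_cancel]
      have hd := Nat.div_add_mod (x - 1) m
      have h2 : (x - 1) / m * m = m * ((x - 1) / m) := by ring
      omega
    · rintro ⟨b, s⟩ hp
      simp only [Finset.mem_product, mem_Icc] at hp
      obtain ⟨⟨hb1, hbk⟩, hs1, hsm⟩ := hp
      obtain ⟨b', rfl⟩ : ∃ b', b = b' + 1 := ⟨b - 1, by omega⟩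
      obtain ⟨s', rfl⟩ : ∃ s', s = s' + 1 := ⟨s - 1, by omega⟩
      show ((((b' + 1 - 1) * m + (s' + 1)) - 1) / m + 1,
            (((b' + 1 - 1) * m + (s' + 1)) - 1) % m + 1) = (b' + 1, s' + 1)
      simp only [Nat.add_sub_cancel]
      have key : b' * m + (s' + 1) - 1 = s' + b' * m := by omega
      rw [key]
      have hdiv : (s' + b' * m) / m = b' := by
        rw [Nat.add_mul_div_right _ _ (by omega : 0 < m), Nat.div_eq_of_lt (by omega)]
        omega
      have hmod : (s' + b' * m) % m = s' := by
        rw [Nat.add_mul_mod_self_right, Nat.mod_eq_of_lt (by omega)]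
      rw [hdiv, hmod]
    · intro x hx
      rfl
  rw [h, Finset.sum_product]
  simp [Finset.sum_const, Nat.card_Icc]

lemma gauss_reflect : ∀ (d r : ℕ), (∑ s ∈ Finset.Icc r (r + d), (r + d - s)) * 2 = d * (d + 1) := by
  intro d
  induction d with
  | zero => intro r; simp
  | succ d ih =>
    intro r
    have hins : Finset.Icc r (r + (d+1)) = insert r (Finset.Icc (r+1) (r + (d+1))) := by
      rw [← Finset.Ioc_insert_left (by omega), Finset.Icc_add_one_left_eq_Ioc]
    rw [hins, Finset.sum_insert (by simp)]
    have h1 : ∑ s ∈ Finset.Icc (r+1) (r + (d+1)), (r + (d+1) - s)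
        = ∑ s ∈ Finset.Icc (r+1) ((r+1) + d), ((r+1) + d - s) := by
      apply Finset.sum_congr (by rw [show r + (d+1) = (r+1)+d by ring])
      intro x _; congr 1; omega
    rw [h1]
    have h2 := ih (r + 1)
    have h3 : (d+1) * (d+1+1) = d * (d+1) + 2*(d+1) := by ring
    omega

lemma gauss_Icc (a : ℕ) : (∑ s ∈ Finset.Icc 1 a, s) * 2 = a * (a + 1) := by
  have h0 : ∑ s ∈ Finset.range (a+1), s = ∑ s ∈ Finset.Icc 1 a, s := by
    rw [Finset.range_eq_Ico, Finset.Ico_add_one_right_eq_Icc, ← Finset.Ioc_insert_left (Nat.zero_le a),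
      Finset.sum_insert (by simp), ← Finset.Icc_add_one_left_eq_Ioc]
    simp
  have h1 := Finset.sum_range_id_mul_two (a+1)
  rw [h0] at h1
  simpa [Nat.mul_comm] using h1

lemma sum_G_le (m r : ℕ) (hr1 : 1 ≤ r) (hrm : r ≤ m) :
    2 * (∑ s ∈ Finset.Icc 1 m, (if r ≤ s then m - s else s)) ≤ m * (m - 1) := by
  obtain ⟨a, rfl⟩ : ∃ a, r = a + 1 := ⟨r - 1, by omega⟩
  obtain ⟨c, rfl⟩ : ∃ c, m = a + 1 + c := ⟨m - (a + 1), by omega⟩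
  have hsplit : ∑ s ∈ Finset.Icc 1 (a+1+c), (if a + 1 ≤ s then (a+1+c) - s else s)
      = (∑ s ∈ Finset.Icc 1 a, s) + ∑ s ∈ Finset.Icc (a+1) (a+1+c), ((a+1+c) - s) := by
    rw [show Finset.Icc 1 (a+1+c) = Finset.Ioc 0 (a+1+c) from (Finset.Icc_add_one_left_eq_Ioc 0 _)]
    rw [← Finset.sum_Ioc_consecutive _ (by omega : 0 ≤ a) (by omega : a ≤ a+1+c)]
    congr 1
    · rw [← Finset.Icc_add_one_left_eq_Ioc]
      apply Finset.sum_congr rfl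
      intro x hx
      simp only [mem_Icc] at hx
      rw [if_neg (by omega)]
    · rw [← Finset.Icc_add_one_left_eq_Ioc]
      apply Finset.sum_congr rfl
      intro x hx
      simp only [mem_Icc] at hx
      rw [if_pos (by omega)]
  rw [hsplit]
  have g1 := gauss_Icc a
  have g2 : (∑ s ∈ Finset.Icc (a+1) ((a+1) + c), ((a+1) + c - s)) * 2 = c * (c+1) :=
    gauss_reflect c (a+1)
  have hrw : a + 1 + c = (a + 1) + c := rfl
  have hsq : a * (a + 1) + c * (c + 1) ≤ (a + 1 + c) * (a + c) := by nlinarith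
  have hm1 : (a + 1 + c) - 1 = a + c := by omega
  rw [hm1]
  linarith [g1, g2, hsq]



lemma card_clus_inter (m k r : ℕ) (hm : 1 ≤ m) (hr1 : 1 ≤ r) (hrm : r ≤ m)
    (i : ℕ) (hi1 : 1 ≤ i) (hi2 : i ≤ k * m) :
    (Finset.Icc 1 i ∩ clus m k r).card =
      if r ≤ (i - 1) % m + 1 then (i - 1) / m + 1 else (i - 1) / m := by
  have himg : Finset.Icc 1 i ∩ clus m k r =
      ((Finset.Icc 1 k).filter (fun j => (j - 1) * m + r ≤ i)).image
        (fun j => (j - 1) * m + r) := by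
    ext y
    simp only [Finset.mem_inter, mem_Icc, mem_clus, Finset.mem_image, Finset.mem_filter]
    constructor
    · rintro ⟨⟨hy1, hyi⟩, j, hj1, hjk, rfl⟩
      exact ⟨j, ⟨⟨hj1, hjk⟩, hyi⟩, rfl⟩
    · rintro ⟨j, ⟨hj, hle⟩, rfl⟩
      exact ⟨⟨by omega, hle⟩, j, hj.1, hj.2, rfl⟩
  rw [himg, Finset.card_image_of_injOn
      ((clus_injOn m k r hm).mono (by intro z hz; simp at hz ⊢; exact hz.1)),
    filter_clus_le m k r hm hr1 hrm i hi1 hi2, Nat.card_Icc]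
  omega

lemma abs_inner (m k r : ℕ) (hm : 1 ≤ m) (hk : 1 ≤ k) (hr1 : 1 ≤ r) (hrm : r ≤ m)
    (i : ℕ) (hi1 : 1 ≤ i) (hi2 : i ≤ k * m) :
    |∑ j ∈ Finset.Icc 1 i, ((if j ∈ clus m k r then (1 : ℝ) / k else 0) - 1 / ((k*m : ℕ) : ℝ))|
      = (((if r ≤ (i - 1) % m + 1 then m - ((i - 1) % m + 1) else (i - 1) % m + 1) : ℕ) : ℝ)
          / ((k*m : ℕ) : ℝ) := by
  have hd := Nat.div_add_mod (i - 1) m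
  have hsm : (i - 1) % m < m := Nat.mod_lt _ (by omega)
  set q := (i - 1) / m with hq
  set s := (i - 1) % m + 1 with hs
  have hiqs : m * q + s = i := by omega
  have hkR : (0:ℝ) < (k:ℝ) := by exact_mod_cast hk
  have hmR : (0:ℝ) < (m:ℝ) := by exact_mod_cast hm
  have hnR : (0:ℝ) < ((k*m : ℕ):ℝ) := by positivity
  have hsum : ∑ j ∈ Finset.Icc 1 i, ((if j ∈ clus m k r then (1 : ℝ) / k else 0) - 1 / ((k*m : ℕ) : ℝ))
      = ((Finset.Icc 1 i ∩ clus m k r).card : ℝ) / k - (i : ℝ) / ((k*m : ℕ) : ℝ) := by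
    rw [Finset.sum_sub_distrib, Finset.sum_ite_mem, Finset.sum_const, Finset.sum_const,
      Nat.card_Icc, show i + 1 - 1 = i from by omega, nsmul_eq_mul, nsmul_eq_mul]
    push_cast
    ring
  rw [hsum, card_clus_inter m k r hm hr1 hrm i hi1 hi2]
  have hiR : (i : ℝ) = (m : ℝ) * q + s := by exact_mod_cast hiqs.symm
  split
  · rename_i hcase
    have hval : ((q + 1 : ℕ) : ℝ) / k - (i : ℝ) / ((k*m : ℕ) : ℝ)
        = ((m : ℝ) - s) / ((k*m : ℕ) : ℝ) := by
      rw [hiR]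
      push_cast
      field_simp
      ring
    rw [hval, abs_div, abs_of_pos hnR, abs_of_nonneg (by
      have : (s:ℝ) ≤ (m:ℝ) := by exact_mod_cast (by omega : s ≤ m)
      linarith)]
    congr 1
    push_cast [Nat.cast_sub (show s ≤ m by omega)]
    ring
  · rename_i hcase
    have hval : ((q : ℕ) : ℝ) / k - (i : ℝ) / ((k*m : ℕ) : ℝ)
        = -((s:ℝ) / ((k*m : ℕ) : ℝ)) := by
      rw [hiR]
      push_cast
      field_simp
      ring
    rw [hval, abs_neg, abs_div, abs_of_pos hnR, abs_of_nonneg (by positivity)]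

lemma EMD_clus_le (m k r : ℕ) (hm : 1 ≤ m) (hk : 1 ≤ k) (hr1 : 1 ≤ r) (hrm : r ≤ m)
    (hn2 : 2 ≤ k * m) :
    EMD (k * m) k (clus m k r) ≤ (((k*m : ℕ) : ℝ) - k) / (2 * (((k*m : ℕ) : ℝ) - 1) * k) := by
  have hNR : (2:ℝ) ≤ ((k*m : ℕ):ℝ) := by exact_mod_cast hn2
  have hkR : (1:ℝ) ≤ (k:ℝ) := by exact_mod_cast hk
  have hmR : (1:ℝ) ≤ (m:ℝ) := by exact_mod_cast hm
  set N : ℝ := ((k*m : ℕ):ℝ) with hN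
  have hNpos : (0:ℝ) < N := by linarith
  have hN1 : (0:ℝ) < N - 1 := by linarith
  rw [EMD]
  have hcongr : ∑ i ∈ Finset.Icc 1 (k*m),
      |∑ j ∈ Finset.Icc 1 i, ((if j ∈ clus m k r then (1 : ℝ) / k else 0) - 1 / N)|
      = ∑ i ∈ Finset.Icc 1 (k*m),
        (((if r ≤ (i - 1) % m + 1 then m - ((i - 1) % m + 1) else (i - 1) % m + 1) : ℕ) : ℝ) / N := by
    apply Finset.sum_congr rfl
    intro i hi
    simp only [mem_Icc] at hi
    exact abs_inner m k r hm hk hr1 hrm i hi.1 hi.2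
  rw [hcongr, ← Finset.sum_div, ← Nat.cast_sum]
  rw [sum_pos_reindex m k hm (fun s => if r ≤ s then m - s else s)]
  set T : ℕ := ∑ s ∈ Finset.Icc 1 m, (if r ≤ s then m - s else s) with hT
  have hTle : 2 * T ≤ m * (m - 1) := sum_G_le m r hr1 hrm
  have hTR : 2 * (T:ℝ) ≤ (m:ℝ) * ((m:ℝ) - 1) := by
    have : ((2 * T : ℕ) : ℝ) ≤ ((m * (m-1) : ℕ) : ℝ) := by exact_mod_cast hTle
    push_cast [Nat.cast_sub hm] at this
    linarith
  have hNval : N = (k:ℝ) * (m:ℝ) := by push_cast [hN]; ring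
  have hk0 : (0:ℝ) < (k:ℝ) := by linarith
  have hcast : ((k * T : ℕ) : ℝ) = (k:ℝ) * (T:ℝ) := by push_cast; ring
  rw [hcast, ← hN]
  have hkey : (1:ℝ) / (N - 1) * ((k:ℝ) * T / N) = ((k:ℝ) * T) / ((N - 1) * N) := by
    field_simp
  rw [hkey, div_le_div_iff₀ (mul_pos hN1 hNpos) (by positivity)]
  rw [hNval] at *
  have hkm1 : (1:ℝ) ≤ (k:ℝ) * m := by nlinarith
  have hc : (0:ℝ) ≤ (k:ℝ) * k * ((k:ℝ) * m - 1) := by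
    apply mul_nonneg (by positivity)
    linarith
  nlinarith [mul_le_mul_of_nonneg_left hTR hc]



/-- If `k ∣ n` and `m = n/k`, there is a partition of `{1,…,n}` into `m`
clusters, each of size exactly `k` and each containing exactly one element
from every consecutive block `S_i = {(i−1)m+1, …, im}`, such that every
cluster `C` of the partition satisfies `EMD(C) ≤ (n−k)/(2(n−1)k)`.
In particular, for any real `t > 0` with `k ≥ n/(2(n−1)t+1)`, the partition
is simultaneously `k`-anonymous (all clusters have at least `k` records) and
`t`-close (all clusters `C` satisfy `EMD(C) ≤ t`). -/
theorem exists_k_anonymous_t_close_partition (n k m : ℕ) (hn : 2 ≤ n)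
    (hk : 1 ≤ k) (hdvd : k ∣ n) (hm : m = n / k) :
    ∃ P : Finset (Finset ℕ),
      P.card = m ∧
      (∀ x ∈ Finset.Icc 1 n, ∃! C, C ∈ P ∧ x ∈ C) ∧
      (∀ C ∈ P, C ⊆ Finset.Icc 1 n) ∧
      (∀ C ∈ P, C.card = k) ∧
      (∀ C ∈ P, ∀ i ∈ Finset.Icc 1 k,
        (C ∩ Finset.Icc ((i - 1) * m + 1) (i * m)).card = 1) ∧
      (∀ C ∈ P, EMD n k C ≤ ((n : ℝ) - k) / (2 * ((n : ℝ) - 1) * k)) ∧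
      (∀ t : ℝ, 0 < t → (n : ℝ) / (2 * ((n : ℝ) - 1) * t + 1) ≤ (k : ℝ) →
        (∀ C ∈ P, k ≤ C.card) ∧ (∀ C ∈ P, EMD n k C ≤ t)) := by
  have hnkm : n = k * m := by
    rw [hm, Nat.mul_div_cancel' hdvd]
  have hm1 : 1 ≤ m := by
    rcases Nat.eq_zero_or_pos m with h | h
    · subst h; simp at hnkm; omega
    · exact h
  -- membership of r in its own cluster
  have hself : ∀ r, 1 ≤ r → r ∈ clus m k r := by
    intro r hr
    exact mem_clus.2 ⟨1, le_refl 1, hk, by simp⟩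
  have hP_inj : Set.InjOn (clus m k) (Finset.Icc 1 m) := by
    intro a ha b hb hab
    simp only [coe_Icc, Set.mem_Icc] at ha hb
    have h1 : a ∈ clus m k b := hab ▸ hself a ha.1
    have h2 := (mem_clus_iff_pos hm1 hb.1 hb.2 ha.1 (by
      calc a ≤ m := ha.2
        _ ≤ k * m := Nat.le_mul_of_pos_left m (by omega))).1 h1
    have : (a - 1) % m = a - 1 := Nat.mod_eq_of_lt (by omega)
    omega
  -- characterization of membership
  have hmem : ∀ x, 1 ≤ x → x ≤ n → ∀ r, 1 ≤ r → r ≤ m →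
      (x ∈ clus m k r ↔ (x - 1) % m + 1 = r) := by
    intro x hx1 hx2 r hr1 hrm
    exact mem_clus_iff_pos hm1 hr1 hrm hx1 (by omega)
  refine ⟨(Finset.Icc 1 m).image (clus m k), ?_, ?_, ?_, ?_, ?_, ?_, ?_⟩
  · rw [Finset.card_image_of_injOn hP_inj, Nat.card_Icc]; omega
  · -- partition property
    intro x hx
    simp only [mem_Icc] at hx
    have hr1 : 1 ≤ (x - 1) % m + 1 := Nat.le_add_left 1 _
    have hrm : (x - 1) % m + 1 ≤ m := Nat.mod_lt _ (by omega)
    refine ⟨clus m k ((x - 1) % m + 1), ⟨Finset.mem_image_of_mem _ (mem_Icc.2 ⟨hr1, hrm⟩),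
      (hmem x hx.1 hx.2 _ hr1 hrm).2 rfl⟩, ?_⟩
    rintro C ⟨hC, hxC⟩
    obtain ⟨r, hr, rfl⟩ := Finset.mem_image.1 hC
    simp only [mem_Icc] at hr
    have := (hmem x hx.1 hx.2 r hr.1 hr.2).1 hxC
    rw [← this]
  · -- subset
    intro C hC
    obtain ⟨r, hr, rfl⟩ := Finset.mem_image.1 hC
    simp only [mem_Icc] at hr
    intro x hx
    have := clus_subset hr.1 hr.2 hx
    simp only [mem_Icc]; omega
  · -- card
    intro C hC
    obtain ⟨r, hr, rfl⟩ := Finset.mem_image.1 hC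
    exact card_clus m k r hm1
  · -- block intersection
    intro C hC i hi
    obtain ⟨r, hr, rfl⟩ := Finset.mem_image.1 hC
    simp only [mem_Icc] at hr hi
    obtain ⟨i', rfl⟩ : ∃ i', i = i' + 1 := ⟨i - 1, by omega⟩
    have hset : clus m k (r) ∩ Finset.Icc ((i' + 1 - 1) * m + 1) ((i' + 1) * m)
        = {i' * m + r} := by
      ext y
      simp only [Finset.mem_inter, mem_Icc, Finset.mem_singleton, Nat.add_sub_cancel, mem_clus]
      constructor
      · rintro ⟨⟨j, hj1, hjk, rfl⟩, hy1, hy2⟩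
        obtain ⟨j', rfl⟩ : ∃ j', j = j' + 1 := ⟨j - 1, by omega⟩
        simp only [Nat.add_sub_cancel] at *
        rcases Nat.lt_trichotomy j' i' with h | h | h
        · exfalso
          have h1 : j' * m + m ≤ i' * m := by
            have := Nat.mul_le_mul_right m (show j' + 1 ≤ i' by omega)
            have he : (j' + 1) * m = j' * m + m := by ring
            omega
          omega
        · rw [h]
        · exfalso
          have h1 : i' * m + m ≤ j' * m := by
            have := Nat.mul_le_mul_right m (show i' + 1 ≤ j' by omega)
            have he : (i' + 1) * m = i' * m + m := by ring
            omega
          have he : (i' + 1) * m = i' * m + m := by ring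
          omega
      · rintro rfl
        refine ⟨⟨i' + 1, by omega, by omega, by simp⟩, by omega, ?_⟩
        have he : (i' + 1) * m = i' * m + m := by ring
        omega
    rw [hset, Finset.card_singleton]
  · -- EMD bound
    intro C hC
    obtain ⟨r, hr, rfl⟩ := Finset.mem_image.1 hC
    simp only [mem_Icc] at hr
    have := EMD_clus_le m k r hm1 hk hr.1 hr.2 (by omega)
    rw [← hnkm] at this
    exact this
  · -- final
    intro t ht hkt
    constructor
    · intro C hC
      obtain ⟨r, hr, rfl⟩ := Finset.mem_image.1 hC
      rw [card_clus m k r hm1]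
    · intro C hC
      obtain ⟨r, hr, rfl⟩ := Finset.mem_image.1 hC
      simp only [mem_Icc] at hr
      have h1 := EMD_clus_le m k r hm1 hk hr.1 hr.2 (by omega)
      rw [← hnkm] at h1
      have hnR : (2:ℝ) ≤ (n:ℝ) := by exact_mod_cast hn
      have hkR : (1:ℝ) ≤ (k:ℝ) := by exact_mod_cast hk
      have hden : (0:ℝ) < 2 * ((n:ℝ) - 1) * t + 1 := by nlinarith
      have hkt' : (n:ℝ) ≤ (k:ℝ) * (2 * ((n:ℝ) - 1) * t + 1) := by
        rw [div_le_iff₀ hden] at hkt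
        linarith
      have hbound : ((n : ℝ) - k) / (2 * ((n : ℝ) - 1) * k) ≤ t := by
        rw [div_le_iff₀ (by nlinarith : (0:ℝ) < 2 * ((n:ℝ) - 1) * k)]
        nlinarith
      linarith
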